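/- Let A be a symmetric bilinear form on a 2m-dimensional real inner product space V with orthogonal complex structure J, let u ∈ V be a unit vector, and suppose A ≥ 2·(u♭ ⊗ u♭) + 2c·(g − u♭ ⊗ u♭) as quadratic forms, where g is the inner product, u♭ = ⟨u, ·⟩, and c > 0. Let ε₁ ≤ ⋯ ≤ ε_m be the eigenvalues of the Hermitian form H(Z, W̄) := A(Z, W̄) restricted to (1,0)-vectors (equivalently, ε_i δ_{ij} = (A(e_i,e_j) + A(Je_i,Je_j))/2 for an adapted basis). Then Σ_{i=1}^{m−1} ε_i ≥ 1 + (2m−3)c if c ≥ 1, and Σ_{i=1}^{m−1} ε_i ≥ 2(m−1)c if c < 1. -/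
import Mathlib


open scoped InnerProductSpace

/-- linear algebra core of Lemma 4.4: Let `A` be a symmetric
bilinear form on a `2m`-dimensional real inner product space with orthogonal
complex structure `J`, bounded below by `2 u♭⊗u♭ + 2c(g - u♭⊗u♭)` for a unit
vector `u` and `c > 0`. If `ε 0 ≤ ⋯ ≤ ε (m-1)` are the Hermitian eigenvalues
of `A` with respect to an adapted unitary frame `{e i, J e i}`, then
`Σ_{i<m-1} ε i ≥ 1 + (2m-3)c` if `c ≥ 1`, and `≥ 2(m-1)c` if `c < 1`. -/
theorem stmt12 {V : Type*} [NormedAddCommGroup V] [InnerProductSpace ℝ V]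
    (m : ℕ) (hm : 2 ≤ m) (hdim : Module.finrank ℝ V = 2 * m)
    (J : V →ₗ[ℝ] V)
    (hJ2 : ∀ x, J (J x) = -x)
    (hJiso : ∀ x y : V, ⟪J x, J y⟫_ℝ = ⟪x, y⟫_ℝ)
    (A : V →ₗ[ℝ] V →ₗ[ℝ] ℝ) (hAsym : ∀ x y, A x y = A y x)
    (u : V) (hu : ‖u‖ = 1) (c : ℝ) (hc : 0 < c)
    (hlow : ∀ X : V, 2 * ⟪u, X⟫_ℝ ^ 2 + 2 * c * (‖X‖^2 - ⟪u, X⟫_ℝ ^ 2) ≤ A X X)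
    (e : ℕ → V) (ε : ℕ → ℝ)
    (horth : ∀ i < m, ∀ j < m, ⟪e i, e j⟫_ℝ = if i = j then 1 else 0)
    (horthJ : ∀ i < m, ∀ j < m, ⟪e i, J (e j)⟫_ℝ = 0)
    (hεmono : ∀ i j, i ≤ j → j < m → ε i ≤ ε j)
    (hdiag : ∀ i < m, ∀ j < m,
      (A (e i) (e j) + A (J (e i)) (J (e j))) / 2 = if i = j then ε i else 0) :
    (1 ≤ c → 1 + (2 * (m:ℝ) - 3) * c ≤ ∑ i ∈ Finset.range (m - 1), ε i) ∧
    (c < 1 → 2 * ((m:ℝ) - 1) * c ≤ ∑ i ∈ Finset.range (m - 1), ε i) := by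
  have hnorm : ∀ i < m, ‖e i‖ ^ 2 = 1 := by
    intro i hi
    rw [← real_inner_self_eq_norm_sq]
    simpa using horth i hi i hi
  have hnormJ : ∀ i < m, ‖J (e i)‖ ^ 2 = 1 := by
    intro i hi
    rw [← real_inner_self_eq_norm_sq, hJiso]
    simpa using horth i hi i hi
  -- lower bound for each eigenvalue
  have hεlb : ∀ i < m,
      2 * c + (1 - c) * (⟪u, e i⟫_ℝ ^ 2 + ⟪u, J (e i)⟫_ℝ ^ 2) ≤ ε i := by
    intro i hi
    have h1 := hlow (e i)
    have h2 := hlow (J (e i))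
    have hd := hdiag i hi i hi
    rw [if_pos rfl] at hd
    rw [hnorm i hi] at h1
    rw [hnormJ i hi] at h2
    nlinarith [h1, h2, hd]
  -- Bessel inequality
  have hbessel : ∑ i ∈ Finset.range (m - 1),
      (⟪u, e i⟫_ℝ ^ 2 + ⟪u, J (e i)⟫_ℝ ^ 2) ≤ 1 := by
    have hmlt : ∀ i : Fin (m - 1), (i : ℕ) < m := fun i => lt_of_lt_of_le i.2 (by omega)
    set f : Fin (m - 1) ⊕ Fin (m - 1) → V :=
      Sum.elim (fun i => e i) (fun i => J (e i)) with hf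
    have hon : Orthonormal ℝ f := by
      rw [orthonormal_iff_ite]
      rintro (i | i) (j | j) <;> simp only [hf, Sum.elim_inl, Sum.elim_inr]
      · rw [horth i (hmlt i) j (hmlt j)]
        simp [Fin.val_eq_val]
      · rw [horthJ i (hmlt i) j (hmlt j)]
        simp
      · have : ⟪J (e (i : ℕ)), e (j : ℕ)⟫_ℝ = 0 := by
          rw [real_inner_comm]
          exact horthJ j (hmlt j) i (hmlt i)
        rw [this]; simp
      · rw [hJiso, horth i (hmlt i) j (hmlt j)]
        simp [Fin.val_eq_val]
    have hb := hon.sum_inner_products_le (s := Finset.univ) u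
    rw [Fintype.sum_sum_type] at hb
    simp only [hf, Sum.elim_inl, Sum.elim_inr, Real.norm_eq_abs, sq_abs] at hb
    rw [hu] at hb
    have e1 : ∀ i : Fin (m - 1), ⟪e (i : ℕ), u⟫_ℝ ^ 2 = ⟪u, e (i : ℕ)⟫_ℝ ^ 2 := by
      intro i; rw [real_inner_comm]
    have e2 : ∀ i : Fin (m - 1), ⟪J (e (i : ℕ)), u⟫_ℝ ^ 2 = ⟪u, J (e (i : ℕ))⟫_ℝ ^ 2 := by
      intro i; rw [real_inner_comm]
    rw [Finset.sum_congr rfl (fun i _ => e1 i), Finset.sum_congr rfl (fun i _ => e2 i)] at hb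
    rw [Finset.sum_add_distrib, ← Fin.sum_univ_eq_sum_range (fun i => ⟪u, e i⟫_ℝ ^ 2),
      ← Fin.sum_univ_eq_sum_range (fun i => ⟪u, J (e i)⟫_ℝ ^ 2)]
    simpa using hb
  have hcast : ((m - 1 : ℕ) : ℝ) = (m : ℝ) - 1 := by
    rw [Nat.cast_sub (by omega)]; simp
  have hsum : ∑ i ∈ Finset.range (m - 1),
      (2 * c + (1 - c) * (⟪u, e i⟫_ℝ ^ 2 + ⟪u, J (e i)⟫_ℝ ^ 2))
      ≤ ∑ i ∈ Finset.range (m - 1), ε i := by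
    refine Finset.sum_le_sum fun i hi => ?_
    exact hεlb i (by have := Finset.mem_range.mp hi; omega)
  rw [Finset.sum_add_distrib, Finset.sum_const, ← Finset.mul_sum, Finset.card_range,
    nsmul_eq_mul, hcast] at hsum
  constructor
  · intro hc1
    have h1 : (1 - c) * (∑ i ∈ Finset.range (m - 1),
        (⟪u, e i⟫_ℝ ^ 2 + ⟪u, J (e i)⟫_ℝ ^ 2)) ≥ (1 - c) * 1 :=
      mul_le_mul_of_nonpos_left hbessel (by linarith)
    have hm2 : (2 : ℝ) ≤ (m : ℝ) := by exact_mod_cast hm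
    nlinarith [hsum, h1]
  · intro hc1
    have h0 : 0 ≤ ∑ i ∈ Finset.range (m - 1),
        (⟪u, e i⟫_ℝ ^ 2 + ⟪u, J (e i)⟫_ℝ ^ 2) :=
      Finset.sum_nonneg fun i _ => by positivity
    nlinarith [hsum, h0]
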